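/- For n ≥ 3, the Fermat ideal J_n = (x(yⁿ − zⁿ), y(zⁿ − xⁿ), z(xⁿ − yⁿ)) in S = ℂ[x,y,z] is a radical ideal; explicitly, J_n equals the intersection of the n² + 3 prime ideals P_{ij} = (y − η^i z, z − η^j x) for 0 ≤ i,j ≤ n−1 (η a primitive n-th root of unity), together with (y,z), (x,z), and (x,y). -/

import Mathlib

open MvPolynomial

noncomputable section

abbrev R3 : Type := MvPolynomial (Fin 3) ℂ

lemma sub_aeval_mem (e : Fin 3 → R3) (G : Set R3)
    (hX : ∀ i, X i - e i ∈ Ideal.span G) (f : R3) :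
    f - aeval e f ∈ Ideal.span G := by
  have key : (Ideal.Quotient.mkₐ ℂ (Ideal.span G)).comp (aeval e) =
      Ideal.Quotient.mkₐ ℂ (Ideal.span G) := by
    apply MvPolynomial.algHom_ext
    intro i
    simp only [AlgHom.comp_apply, aeval_X, Ideal.Quotient.mkₐ_eq_mk]
    rw [Ideal.Quotient.eq]
    simpa using (Ideal.span G).neg_mem (hX i)
  have h := congrArg (fun φ : R3 →ₐ[ℂ] _ => φ f) key
  simp only [AlgHom.comp_apply, Ideal.Quotient.mkₐ_eq_mk] at h
  have h2 := Ideal.Quotient.eq.mp h.symm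
  exact h2

lemma mem_span_iff_aeval (e : Fin 3 → R3) (G : Set R3)
    (h0 : ∀ g ∈ G, aeval e g = 0) (hX : ∀ i, X i - e i ∈ Ideal.span G) (f : R3) :
    f ∈ Ideal.span G ↔ aeval e f = 0 := by
  constructor
  · intro hf
    have hle : Ideal.span G ≤ RingHom.ker ((aeval e : R3 →ₐ[ℂ] R3) : R3 →+* R3) :=
      Ideal.span_le.mpr (fun g hg => by simpa [RingHom.mem_ker] using h0 g hg)
    simpa [RingHom.mem_ker] using hle hf
  · intro hf
    have := sub_aeval_mem e G hX f
    rwa [hf, sub_zero] at this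

-- primitive root product identity, scalar version
lemma prod_sub_pow {n : ℕ} (hn : 0 < n) {η : ℂ} (hη : IsPrimitiveRoot η n) (c d : ℂ) :
    ∏ i ∈ Finset.range n, (c - η ^ i * d) = c ^ n - d ^ n := by
  classical
  have himg : (Finset.range n).image (η ^ ·) = Polynomial.nthRootsFinset n (1 : ℂ) := by
    apply Finset.eq_of_subset_of_card_le
    · intro x hx
      simp only [Finset.mem_image, Finset.mem_range] at hx
      obtain ⟨i, hi, rfl⟩ := hx
      rw [Polynomial.mem_nthRootsFinset hn (1 : ℂ), ← pow_mul, mul_comm, pow_mul, hη.pow_eq_one, one_pow]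
    · rw [hη.card_nthRootsFinset, Finset.card_image_of_injOn]
      · simp
      · intro i hi j hj hij
        exact hη.pow_inj (Finset.mem_range.mp hi) (Finset.mem_range.mp hj) hij
  have hpoly : (Polynomial.X ^ n - 1 : Polynomial ℂ) =
      ∏ i ∈ Finset.range n, (Polynomial.X - Polynomial.C (η ^ i)) := by
    rw [Polynomial.X_pow_sub_one_eq_prod hn hη, ← himg, Finset.prod_image]
    intro i hi j hj hij
    exact hη.pow_inj (Finset.mem_range.mp hi) (Finset.mem_range.mp hj) hij
  have hev : ∀ t : ℂ, ∏ i ∈ Finset.range n, (t - η ^ i) = t ^ n - 1 := by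
    intro t
    have := congrArg (Polynomial.eval t) hpoly
    simpa [Polynomial.eval_prod] using this.symm
  rcases eq_or_ne d 0 with rfl | hd
  · simp [hn.ne']
  · have : ∀ i, c - η ^ i * d = d * (c / d - η ^ i) := by
      intro i; field_simp
    simp_rw [this]
    rw [Finset.prod_mul_distrib, Finset.prod_const, Finset.card_range, hev, div_pow]
    field_simp

def lin1 (a : ℂ) : R3 := X 1 - C a * X 2
def lin2 (b : ℂ) : R3 := X 2 - C b * X 0

lemma prod_lin1 {n : ℕ} (hn : 0 < n) {η : ℂ} (hη : IsPrimitiveRoot η n) :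
    ∏ i : Fin n, lin1 (η ^ (i : ℕ)) = X 1 ^ n - X 2 ^ n := by
  apply MvPolynomial.funext
  intro x
  rw [map_prod]
  simp only [lin1, map_sub, map_mul, map_pow, eval_X, eval_C]
  rw [Fin.prod_univ_eq_prod_range (fun i => x 1 - η ^ i * x 2)]
  exact prod_sub_pow hn hη (x 1) (x 2)

lemma prod_lin2 {n : ℕ} (hn : 0 < n) {η : ℂ} (hη : IsPrimitiveRoot η n) :
    ∏ j : Fin n, lin2 (η ^ (j : ℕ)) = X 2 ^ n - X 0 ^ n := by
  apply MvPolynomial.funext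
  intro x
  rw [map_prod]
  simp only [lin2, map_sub, map_mul, map_pow, eval_X, eval_C]
  rw [Fin.prod_univ_eq_prod_range (fun j => x 2 - η ^ j * x 0)]
  exact prod_sub_pow hn hη (x 2) (x 0)

-- kernel characterizations
lemma mem_l_iff (a : ℂ) (f : R3) :
    f ∈ Ideal.span {lin1 a} ↔ aeval (![X 0, C a * X 2, X 2] : Fin 3 → R3) f = 0 := by
  apply mem_span_iff_aeval
  · intro g hg
    simp only [Set.mem_singleton_iff] at hg
    subst hg
    simp [lin1]
  · intro i
    fin_cases i
    · simpa using (Ideal.span {lin1 a}).zero_mem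
    · simpa [lin1] using Ideal.subset_span (Set.mem_singleton _)
    · simpa using (Ideal.span {lin1 a}).zero_mem

lemma mem_m_iff (b : ℂ) (f : R3) :
    f ∈ Ideal.span {lin2 b} ↔ aeval (![X 0, X 1, C b * X 0] : Fin 3 → R3) f = 0 := by
  apply mem_span_iff_aeval
  · intro g hg
    simp only [Set.mem_singleton_iff] at hg
    subst hg
    simp [lin2]
  · intro i
    fin_cases i
    · simpa using (Ideal.span {lin2 b}).zero_mem
    · simpa using (Ideal.span {lin2 b}).zero_mem
    · simpa [lin2] using Ideal.subset_span (Set.mem_singleton _)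

lemma mem_P_iff (a b : ℂ) (f : R3) :
    f ∈ Ideal.span {lin1 a, lin2 b} ↔ aeval (![X 0, C (a * b) * X 0, C b * X 0] : Fin 3 → R3) f = 0 := by
  apply mem_span_iff_aeval
  · intro g hg
    simp only [Set.mem_insert_iff, Set.mem_singleton_iff] at hg
    rcases hg with rfl | rfl
    · simp [lin1, lin2]; ring
    · simp [lin2]
  · intro i
    fin_cases i
    · simpa using (Ideal.span {lin1 a, lin2 b}).zero_mem
    · show X 1 - C (a * b) * X 0 ∈ Ideal.span {lin1 a, lin2 b}
      refine Ideal.mem_span_pair.mpr ⟨1, C a, ?_⟩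
      simp only [lin1, lin2, map_mul]
      ring
    · refine Ideal.mem_span_pair.mpr ⟨0, 1, ?_⟩
      simp [lin2]

lemma mem_yz_iff (f : R3) :
    f ∈ Ideal.span {(X 1 : R3), X 2} ↔ aeval (![X 0, 0, 0] : Fin 3 → R3) f = 0 := by
  apply mem_span_iff_aeval
  · intro g hg
    rcases hg with rfl | rfl
    · simp
    · simp
  · intro i
    fin_cases i
    · simpa using (Ideal.span {(X 1 : R3), X 2}).zero_mem
    · show (X 1 : R3) - 0 ∈ _
      simpa using Ideal.subset_span (by simp : (X 1 : R3) ∈ _)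
    · show (X 2 : R3) - 0 ∈ _
      simpa using Ideal.subset_span (by simp : (X 2 : R3) ∈ _)

lemma mem_xz_iff (f : R3) :
    f ∈ Ideal.span {(X 0 : R3), X 2} ↔ aeval (![0, X 1, 0] : Fin 3 → R3) f = 0 := by
  apply mem_span_iff_aeval
  · intro g hg
    rcases hg with rfl | rfl
    · simp
    · simp
  · intro i
    fin_cases i
    · show (X 0 : R3) - 0 ∈ _
      simpa using Ideal.subset_span (by simp : (X 0 : R3) ∈ _)
    · simpa using (Ideal.span {(X 0 : R3), X 2}).zero_mem
    · show (X 2 : R3) - 0 ∈ _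
      simpa using Ideal.subset_span (by simp : (X 2 : R3) ∈ _)

lemma mem_xy_iff (f : R3) :
    f ∈ Ideal.span {(X 0 : R3), X 1} ↔ aeval (![0, 0, X 2] : Fin 3 → R3) f = 0 := by
  apply mem_span_iff_aeval
  · intro g hg
    rcases hg with rfl | rfl
    · simp
    · simp
  · intro i
    fin_cases i
    · show (X 0 : R3) - 0 ∈ _
      simpa using Ideal.subset_span (by simp : (X 0 : R3) ∈ _)
    · show (X 1 : R3) - 0 ∈ _
      simpa using Ideal.subset_span (by simp : (X 1 : R3) ∈ _)
    · simpa using (Ideal.span {(X 0 : R3), X 1}).zero_mem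

-- primality
lemma isPrime_of_ker (e : Fin 3 → R3) (G : Set R3)
    (hiff : ∀ f, f ∈ Ideal.span G ↔ aeval e f = 0) : (Ideal.span G).IsPrime := by
  have : Ideal.span G = RingHom.ker ((aeval e : R3 →ₐ[ℂ] R3) : R3 →+* R3) := by
    ext f
    simpa [RingHom.mem_ker] using hiff f
  rw [this]
  exact RingHom.ker_isPrime _

lemma lin2_ne_zero (b : ℂ) : lin2 b ≠ 0 := by
  intro h
  have := congrArg (eval ![0, 0, 1]) h
  simp [lin2] at this

lemma prime_lin2 (b : ℂ) : Prime (lin2 b) := by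
  rw [← Ideal.span_singleton_prime (lin2_ne_zero b)]
  exact isPrime_of_ker _ _ (mem_m_iff b)

lemma not_dvd_of_eval (g h : R3) (x : Fin 3 → ℂ) (hg : eval x g = 0) (hh : eval x h ≠ 0) :
    ¬ g ∣ h := by
  rintro ⟨c, rfl⟩
  rw [map_mul, hg, zero_mul] at hh
  exact hh rfl

lemma lin2_not_dvd_lin2 {b b' : ℂ} (hbb : b ≠ b') : ¬ lin2 b ∣ lin2 b' := by
  apply not_dvd_of_eval _ _ ![1, 0, b]
  · simp [lin2]
  · simp [lin2, sub_eq_zero]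
    exact fun h => hbb h

lemma lin2_not_dvd_X2 {b : ℂ} (hb : b ≠ 0) : ¬ lin2 b ∣ X 2 := by
  apply not_dvd_of_eval _ _ ![1, 0, b]
  · simp [lin2]
  · simpa using hb

lemma prod_dvd {ι : Type} (m : ι → R3) (hprime : ∀ i, Prime (m i))
    (hnd : ∀ i j, i ≠ j → ¬ m i ∣ m j) (s : Finset ι) (z : R3)
    (hd : ∀ i ∈ s, m i ∣ z) : (∏ i ∈ s, m i) ∣ z := by
  classical
  induction s using Finset.induction_on with
  | empty => simpa using one_dvd z
  | @insert a s' ha ih =>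
    rw [Finset.prod_insert ha]
    obtain ⟨c, hc⟩ := ih (fun i hi => hd i (Finset.mem_insert_of_mem hi))
    have hma : m a ∣ (∏ i ∈ s', m i) * c := hc ▸ hd a (Finset.mem_insert_self a s')
    rcases (hprime a).dvd_or_dvd hma with h | h
    · obtain ⟨b, hb, hab⟩ := ((hprime a).dvd_finset_prod_iff _).mp h
      exact absurd hab (hnd a b (fun hh => ha (hh ▸ hb)))
    · obtain ⟨c', rfl⟩ := h
      exact ⟨c', by rw [hc]; ring⟩

lemma mem_span_pair_dvd (e : Fin 3 → R3) (l g f : R3)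
    (hl0 : aeval e l = 0) (hsub : ∀ p : R3, p - aeval e p ∈ Ideal.span {l}) :
    f ∈ Ideal.span {l, g} ↔ aeval e g ∣ aeval e f := by
  constructor
  · intro hf
    obtain ⟨α, β, hαβ⟩ := Ideal.mem_span_pair.mp hf
    refine ⟨aeval e β, ?_⟩
    rw [← hαβ, map_add, map_mul, map_mul, hl0, mul_zero, zero_add, mul_comm]
  · rintro ⟨c, hc⟩
    have hle : Ideal.span {l} ≤ Ideal.span {l, g} :=
      Ideal.span_mono (Set.singleton_subset_iff.mpr (Set.mem_insert _ _))
    have h1 : f - aeval e f ∈ Ideal.span {l, g} := hle (hsub f)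
    have h2 : (aeval e g - g) * c ∈ Ideal.span {l, g} := by
      apply Ideal.mul_mem_right
      apply hle
      have := (Ideal.span {l}).neg_mem (hsub g)
      simpa using this
    have h3 : g * c ∈ Ideal.span {l, g} := by
      apply Ideal.mul_mem_right
      exact Ideal.subset_span (Set.mem_insert_iff.mpr (Or.inr rfl))
    have : f = (f - aeval e f) + ((aeval e g - g) * c + g * c) := by
      rw [hc]; ring
    rw [this]
    exact Ideal.add_mem _ h1 (Ideal.add_mem _ h2 h3)

lemma sub_tau_mem (a : ℂ) (f : R3) :
    f - aeval (![X 0, C a * X 2, X 2] : Fin 3 → R3) f ∈ Ideal.span {lin1 a} := by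
  apply sub_aeval_mem
  intro i
  fin_cases i
  · simpa using (Ideal.span {lin1 a}).zero_mem
  · simpa [lin1] using Ideal.subset_span (Set.mem_singleton _)
  · simpa using (Ideal.span {lin1 a}).zero_mem

lemma tau_lin1_eq_zero (a : ℂ) : aeval (![X 0, C a * X 2, X 2] : Fin 3 → R3) (lin1 a) = 0 := by
  simp [lin1]

lemma mem_lin1_pair_iff (a : ℂ) (g f : R3) :
    f ∈ Ideal.span {lin1 a, g} ↔
      aeval (![X 0, C a * X 2, X 2] : Fin 3 → R3) g ∣
        aeval (![X 0, C a * X 2, X 2] : Fin 3 → R3) f :=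
  mem_span_pair_dvd _ _ _ _ (tau_lin1_eq_zero a) (sub_tau_mem a)

lemma tau_vv (a : ℂ) (n : ℕ) :
    aeval (![X 0, C a * X 2, X 2] : Fin 3 → R3) ((X 2 : R3) ^ n - X 0 ^ n) =
      (X 2 : R3) ^ n - X 0 ^ n := by
  simp

lemma tau_lin2 (a b : ℂ) :
    aeval (![X 0, C a * X 2, X 2] : Fin 3 → R3) (lin2 b) = lin2 b := by
  simp [lin2]

section stages
variable {n : ℕ} {η : ℂ}

lemma eta_pow_ne (hn : 0 < n) (hη : IsPrimitiveRoot η n) {i j : Fin n} (h : i ≠ j) :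
    η ^ (i : ℕ) ≠ η ^ (j : ℕ) := fun hh => h (Fin.ext (hη.pow_inj i.isLt j.isLt hh))

lemma eta_ne_zero (hn : 0 < n) (hη : IsPrimitiveRoot η n) : η ≠ 0 := by
  intro h
  have := hη.pow_eq_one
  rw [h, zero_pow hn.ne'] at this
  exact zero_ne_one this

lemma lin2_eta_not_dvd (hn : 0 < n) (hη : IsPrimitiveRoot η n) {j k : Fin n} (h : j ≠ k) :
    ¬ lin2 (η ^ (j : ℕ)) ∣ lin2 (η ^ (k : ℕ)) :=
  lin2_not_dvd_lin2 (eta_pow_ne hn hη h)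

lemma stage1 (hn : 0 < n) (hη : IsPrimitiveRoot η n) (i : Fin n) (f : R3)
    (hf : ∀ j : Fin n, f ∈ Ideal.span {lin1 (η ^ (i : ℕ)), lin2 (η ^ (j : ℕ))}) :
    f ∈ Ideal.span {lin1 (η ^ (i : ℕ)), (X 2 : R3) ^ n - X 0 ^ n} := by
  rw [mem_lin1_pair_iff, tau_vv, ← prod_lin2 hn hη]
  apply prod_dvd _ (fun j => prime_lin2 _) (fun j k h => lin2_eta_not_dvd hn hη h)
  intro j _
  have := (mem_lin1_pair_iff (η ^ (i : ℕ)) (lin2 (η ^ (j : ℕ))) f).mp (hf j)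
  rwa [tau_lin2] at this

lemma stage2 (hn : 0 < n) (hη : IsPrimitiveRoot η n) (f : R3)
    (hf : ∀ i : Fin n, f ∈ Ideal.span {lin1 (η ^ (i : ℕ)), (X 2 : R3) ^ n - X 0 ^ n}) :
    f ∈ Ideal.span {(X 1 : R3) ^ n - X 2 ^ n, (X 2 : R3) ^ n - X 0 ^ n} := by
  classical
  suffices h : ∀ s : Finset (Fin n),
      f ∈ Ideal.span {∏ i ∈ s, lin1 (η ^ (i : ℕ)), (X 2 : R3) ^ n - X 0 ^ n} by
    have := h Finset.univ
    rwa [prod_lin1 hn hη] at this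
  intro s
  induction s using Finset.induction_on with
  | empty =>
    rw [Finset.prod_empty]
    exact Ideal.mem_span_pair.mpr ⟨f, 0, by ring⟩
  | @insert k s' hk ih =>
    obtain ⟨A, B, hAB⟩ := Ideal.mem_span_pair.mp ih
    set e : Fin 3 → R3 := ![X 0, C (η ^ (k : ℕ)) * X 2, X 2] with he
    -- v divides τ f
    have hdvd : ((X 2 : R3) ^ n - X 0 ^ n) ∣ aeval e f := by
      have := (mem_lin1_pair_iff (η ^ (k : ℕ)) ((X 2 : R3) ^ n - X 0 ^ n) f).mp (hf k)
      rwa [tau_vv] at this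
    -- compute τ of the product
    have hprodτ : aeval e (∏ i ∈ s', lin1 (η ^ (i : ℕ))) =
        C (∏ i ∈ s', (η ^ (k : ℕ) - η ^ (i : ℕ))) * (X 2 : R3) ^ s'.card := by
      rw [map_prod]
      have : ∀ i ∈ s', aeval e (lin1 (η ^ (i : ℕ))) =
          C (η ^ (k : ℕ) - η ^ (i : ℕ)) * (X 2 : R3) := by
        intro i _
        rw [he]
        simp only [lin1, map_sub, map_mul, aeval_X, aeval_C]
        simp only [Matrix.cons_val_one, Matrix.head_cons, Matrix.cons_val_two,
          Matrix.tail_cons, MvPolynomial.algebraMap_eq, map_sub, Matrix.cons_val_zero]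
        ring
      rw [Finset.prod_congr rfl this, Finset.prod_mul_distrib, Finset.prod_const]
      rw [map_prod]
    -- v divides τ A
    have hτf : aeval e f = aeval e A *
        (C (∏ i ∈ s', (η ^ (k : ℕ) - η ^ (i : ℕ))) * (X 2 : R3) ^ s'.card) +
        aeval e B * ((X 2 : R3) ^ n - X 0 ^ n) := by
      rw [← hAB, map_add, map_mul, map_mul, hprodτ, tau_vv]
    have hcne : (∏ i ∈ s', (η ^ (k : ℕ) - η ^ (i : ℕ))) ≠ 0 := by
      apply Finset.prod_ne_zero_iff.mpr
      intro i hi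
      exact sub_ne_zero.mpr (eta_pow_ne hn hη (fun hh => hk (hh ▸ hi)))
    have hunit : IsUnit (C (∏ i ∈ s', (η ^ (k : ℕ) - η ^ (i : ℕ))) : R3) := by
      refine ⟨⟨_, C (∏ i ∈ s', (η ^ (k : ℕ) - η ^ (i : ℕ)))⁻¹, ?_, ?_⟩, rfl⟩
      · rw [← map_mul, mul_inv_cancel₀ hcne, map_one]
      · rw [← map_mul, inv_mul_cancel₀ hcne, map_one]
    have hvA : ((X 2 : R3) ^ n - X 0 ^ n) ∣ aeval e A := by
      rw [← prod_lin2 hn hη]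
      apply prod_dvd _ (fun j => prime_lin2 _) (fun j k h => lin2_eta_not_dvd hn hη h)
      intro j _
      have hdj : lin2 (η ^ (j : ℕ)) ∣ aeval e f := by
        refine dvd_trans ?_ hdvd
        rw [← prod_lin2 hn hη]
        exact Finset.dvd_prod_of_mem _ (Finset.mem_univ j)
      rw [hτf] at hdj
      have hdj2 : lin2 (η ^ (j : ℕ)) ∣ aeval e A *
          (C (∏ i ∈ s', (η ^ (k : ℕ) - η ^ (i : ℕ))) * (X 2 : R3) ^ s'.card) := by
        have hv : lin2 (η ^ (j : ℕ)) ∣ aeval e B * ((X 2 : R3) ^ n - X 0 ^ n) := by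
          apply Dvd.dvd.mul_left
          rw [← prod_lin2 hn hη]
          exact Finset.dvd_prod_of_mem _ (Finset.mem_univ j)
        exact (dvd_add_right hv).mp (by rwa [add_comm] at hdj)
      rcases (prime_lin2 _).dvd_or_dvd hdj2 with h | h
      · exact h
      · rcases (prime_lin2 _).dvd_or_dvd h with h2 | h2
        · exact absurd (isUnit_of_dvd_unit h2 hunit) (prime_lin2 _).not_unit
        · have := (prime_lin2 _).dvd_of_dvd_pow h2
          exact absurd this (lin2_not_dvd_X2 (pow_ne_zero _ (eta_ne_zero hn hη)))
    -- conclude A ∈ (lin1 k, v), then f ∈ (prod, v)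
    have hA : A ∈ Ideal.span {lin1 (η ^ (k : ℕ)), (X 2 : R3) ^ n - X 0 ^ n} := by
      rw [mem_lin1_pair_iff, tau_vv]
      exact hvA
    obtain ⟨α, β, hαβ⟩ := Ideal.mem_span_pair.mp hA
    rw [Finset.prod_insert hk]
    refine Ideal.mem_span_pair.mpr
      ⟨α, β * ∏ i ∈ s', lin1 (η ^ (i : ℕ)) + B, ?_⟩
    rw [← hAB, ← hαβ]
    ring

end stages

section lemA
variable (n : ℕ)

def uP : R3 := X 1 ^ n - X 2 ^ n
def vP : R3 := X 2 ^ n - X 0 ^ n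
def wP : R3 := X 0 ^ n - X 1 ^ n

def Jn : Ideal R3 := Ideal.span {X 0 * uP n, X 1 * vP n, X 2 * wP n}

lemma mem_Jn (a b c : R3) :
    a * (X 0 * uP n) + b * (X 1 * vP n) + c * (X 2 * wP n) ∈ Jn n := by
  refine Ideal.add_mem _ (Ideal.add_mem _ ?_ ?_) ?_ <;>
    refine Ideal.mul_mem_left _ _ (Ideal.subset_span ?_)
  · exact Set.mem_insert _ _
  · exact Set.mem_insert_iff.mpr (Or.inr (Set.mem_insert _ _))
  · exact Set.mem_insert_iff.mpr (Or.inr (Set.mem_insert_iff.mpr (Or.inr rfl)))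

def inK (f : R3) : Prop :=
  ∃ (P Q Rq : Polynomial ℂ) (j : R3), j ∈ Jn n ∧
    f = j + Polynomial.aeval (X 1 : R3) P * uP n +
      X 2 * Polynomial.aeval (X 2 : R3) Q * uP n +
      Polynomial.aeval (X 0 : R3) Rq * vP n

lemma inK_add {f g : R3} (hf : inK n f) (hg : inK n g) : inK n (f + g) := by
  obtain ⟨P, Q, Rq, j, hj, rfl⟩ := hf
  obtain ⟨P', Q', Rq', j', hj', rfl⟩ := hg
  exact ⟨P + P', Q + Q', Rq + Rq', j + j', Ideal.add_mem _ hj hj', by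
    simp only [map_add]; ring⟩

lemma inK_of_mem_Jn {f : R3} (hf : f ∈ Jn n) : inK n f :=
  ⟨0, 0, 0, f, hf, by simp⟩

lemma hA0 (P : Polynomial ℂ) : inK n (X 0 * (Polynomial.aeval (X 1 : R3) P * uP n)) := by
  refine ⟨0, 0, 0, _, mem_Jn n (Polynomial.aeval (X 1 : R3) P) 0 0, ?_⟩
  simp only [map_zero, Polynomial.aeval_zero]
  ring

lemma hA1 (P : Polynomial ℂ) : inK n (X 1 * (Polynomial.aeval (X 1 : R3) P * uP n)) := by
  refine ⟨Polynomial.X * P, 0, 0, 0, (Jn n).zero_mem, ?_⟩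
  simp only [map_mul, Polynomial.aeval_X, map_zero, Polynomial.aeval_zero]
  ring

lemma hA2 (P : Polynomial ℂ) : inK n (X 2 * (Polynomial.aeval (X 1 : R3) P * uP n)) := by
  refine ⟨0, Polynomial.C (P.coeff 0), 0, _,
    mem_Jn n 0 (-(X 2 * Polynomial.aeval (X 1 : R3) P.divX))
      (-(X 1 * Polynomial.aeval (X 1 : R3) P.divX)), ?_⟩
  have h3 : Polynomial.aeval (X 1 : R3) P =
      X 1 * Polynomial.aeval (X 1 : R3) P.divX + C (P.coeff 0) := by
    conv_lhs => rw [← Polynomial.X_mul_divX_add P]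
    rw [map_add, map_mul, Polynomial.aeval_X, Polynomial.aeval_C, MvPolynomial.algebraMap_eq]
  rw [h3]
  simp only [Polynomial.aeval_C, map_zero, Polynomial.aeval_zero,
    MvPolynomial.algebraMap_eq, uP, vP, wP]
  ring

lemma hB0 (Q : Polynomial ℂ) : inK n (X 0 * (X 2 * Polynomial.aeval (X 2 : R3) Q * uP n)) := by
  refine ⟨0, 0, 0, _, mem_Jn n (X 2 * Polynomial.aeval (X 2 : R3) Q) 0 0, ?_⟩
  simp only [map_zero, Polynomial.aeval_zero]
  ring

lemma hB1 (Q : Polynomial ℂ) : inK n (X 1 * (X 2 * Polynomial.aeval (X 2 : R3) Q * uP n)) := by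
  refine ⟨0, 0, 0, _,
    mem_Jn n 0 (-(X 2 * Polynomial.aeval (X 2 : R3) Q))
      (-(X 1 * Polynomial.aeval (X 2 : R3) Q)), ?_⟩
  simp only [map_zero, Polynomial.aeval_zero, uP, vP, wP]
  ring

lemma hB2 (Q : Polynomial ℂ) : inK n (X 2 * (X 2 * Polynomial.aeval (X 2 : R3) Q * uP n)) := by
  refine ⟨0, Polynomial.X * Q, 0, 0, (Jn n).zero_mem, ?_⟩
  simp only [map_mul, Polynomial.aeval_X, map_zero, Polynomial.aeval_zero]
  ring

lemma hC0 (Rq : Polynomial ℂ) : inK n (X 0 * (Polynomial.aeval (X 0 : R3) Rq * vP n)) := by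
  refine ⟨0, 0, Polynomial.X * Rq, 0, (Jn n).zero_mem, ?_⟩
  simp only [map_mul, Polynomial.aeval_X, map_zero, Polynomial.aeval_zero]
  ring

lemma hC1 (Rq : Polynomial ℂ) : inK n (X 1 * (Polynomial.aeval (X 0 : R3) Rq * vP n)) := by
  refine ⟨0, 0, 0, _, mem_Jn n 0 (Polynomial.aeval (X 0 : R3) Rq) 0, ?_⟩
  simp only [map_zero, Polynomial.aeval_zero]
  ring

lemma hC2 (Rq : Polynomial ℂ) : inK n (X 2 * (Polynomial.aeval (X 0 : R3) Rq * vP n)) := by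
  refine ⟨0, Polynomial.C (-(Rq.coeff 0)), 0, _,
    mem_Jn n (-(X 2 * Polynomial.aeval (X 0 : R3) Rq.divX)) 0
      (-(X 0 * Polynomial.aeval (X 0 : R3) Rq.divX) - C (Rq.coeff 0)), ?_⟩
  have h3 : Polynomial.aeval (X 0 : R3) Rq =
      X 0 * Polynomial.aeval (X 0 : R3) Rq.divX + C (Rq.coeff 0) := by
    conv_lhs => rw [← Polynomial.X_mul_divX_add Rq]
    rw [map_add, map_mul, Polynomial.aeval_X, Polynomial.aeval_C, MvPolynomial.algebraMap_eq]
  rw [h3]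
  simp only [Polynomial.aeval_C, map_zero, Polynomial.aeval_zero, map_neg,
    MvPolynomial.algebraMap_eq, uP, vP, wP]
  ring

lemma inK_X_mul (i : Fin 3) (f : R3) (hf : inK n f) : inK n (X i * f) := by
  obtain ⟨P, Q, Rq, j, hj, rfl⟩ := hf
  have hXj : inK n (X i * j) := inK_of_mem_Jn n (Ideal.mul_mem_left _ _ hj)
  have heq : X i * (j + Polynomial.aeval (X 1 : R3) P * uP n +
      X 2 * Polynomial.aeval (X 2 : R3) Q * uP n + Polynomial.aeval (X 0 : R3) Rq * vP n) =
      X i * j + (X i * (Polynomial.aeval (X 1 : R3) P * uP n) +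
      (X i * (X 2 * Polynomial.aeval (X 2 : R3) Q * uP n) +
       X i * (Polynomial.aeval (X 0 : R3) Rq * vP n))) := by ring
  rw [heq]
  refine inK_add n hXj (inK_add n ?_ (inK_add n ?_ ?_)) <;> fin_cases i
  · exact hA0 n P
  · exact hA1 n P
  · exact hA2 n P
  · exact hB0 n Q
  · exact hB1 n Q
  · exact hB2 n Q
  · exact hC0 n Rq
  · exact hC1 n Rq
  · exact hC2 n Rq

lemma inK_mul (s f : R3) (hf : inK n f) : inK n (s * f) := by
  induction s using MvPolynomial.induction_on with
  | C a =>
    obtain ⟨P, Q, Rq, j, hj, rfl⟩ := hf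
    refine ⟨a • P, a • Q, a • Rq, C a * j, Ideal.mul_mem_left _ _ hj, ?_⟩
    simp only [map_smul, smul_eq_C_mul]
    ring
  | add p q hp hq =>
    have h : (p + q) * f = p * f + q * f := by ring
    rw [h]
    exact inK_add n hp hq
  | mul_X p i hp =>
    have h : p * X i * f = X i * (p * f) := by ring
    rw [h]
    exact inK_X_mul n i _ hp

lemma inK_of_mem_uv {f : R3} (hf : f ∈ Ideal.span {uP n, vP n}) : inK n f := by
  obtain ⟨a, b, hab⟩ := Ideal.mem_span_pair.mp hf
  rw [← hab]
  refine inK_add n (inK_mul n a _ ?_) (inK_mul n b _ ?_)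
  · exact ⟨1, 0, 0, 0, (Jn n).zero_mem, by simp⟩
  · exact ⟨0, 0, 1, 0, (Jn n).zero_mem, by simp⟩

end lemA

section extraction
variable (n : ℕ)

lemma P_eq_zero_of_aeval1 {P : Polynomial ℂ} (h : Polynomial.aeval (X 1 : R3) P = 0) :
    P = 0 := by
  have h2 := congrArg (aeval (![0, Polynomial.X, 0] : Fin 3 → Polynomial ℂ)) h
  rw [← Polynomial.aeval_algHom_apply] at h2
  simpa using h2

lemma P_eq_zero_of_aeval0 {P : Polynomial ℂ} (h : Polynomial.aeval (X 0 : R3) P = 0) :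
    P = 0 := by
  have h2 := congrArg (aeval (![Polynomial.X, 0, 0] : Fin 3 → Polynomial ℂ)) h
  rw [← Polynomial.aeval_algHom_apply] at h2
  simpa using h2

lemma P_eq_zero_of_aeval2 {P : Polynomial ℂ} (h : Polynomial.aeval (X 2 : R3) P = 0) :
    P = 0 := by
  have h2 := congrArg (aeval (![0, 0, Polynomial.X] : Fin 3 → Polynomial ℂ)) h
  rw [← Polynomial.aeval_algHom_apply] at h2
  simpa using h2

lemma Jn_le_ker (e : Fin 3 → R3)
    (hg1 : aeval e (X 0 * uP n) = 0) (hg2 : aeval e (X 1 * vP n) = 0)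
    (hg3 : aeval e (X 2 * wP n) = 0) {j : R3} (hj : j ∈ Jn n) : aeval e j = 0 := by
  have hle : Jn n ≤ RingHom.ker ((aeval e : R3 →ₐ[ℂ] R3) : R3 →+* R3) := by
    rw [Jn, Ideal.span_le]
    intro g hg
    simp only [Set.mem_insert_iff, Set.mem_singleton_iff] at hg
    rcases hg with rfl | rfl | rfl
    · simp only [SetLike.mem_coe, RingHom.mem_ker]
      exact hg1
    · simp only [SetLike.mem_coe, RingHom.mem_ker]
      exact hg2
    · simp only [SetLike.mem_coe, RingHom.mem_ker]
      exact hg3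
  simpa [RingHom.mem_ker] using hle hj

lemma final_extraction (hn0 : n ≠ 0) (f : R3) (hf : f ∈ Ideal.span {uP n, vP n})
    (h1 : aeval (![X 0, 0, 0] : Fin 3 → R3) f = 0)
    (h2 : aeval (![0, X 1, 0] : Fin 3 → R3) f = 0)
    (h3 : aeval (![0, 0, X 2] : Fin 3 → R3) f = 0) : f ∈ Jn n := by
  obtain ⟨P, Q, Rq, j, hj, rfl⟩ := inK_of_mem_uv n hf
  have hj1 : aeval (![X 0, 0, 0] : Fin 3 → R3) j = 0 :=
    Jn_le_ker n _ (by simp [uP, zero_pow hn0]) (by simp [vP]) (by simp [wP]) hj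
  have hj2 : aeval (![0, X 1, 0] : Fin 3 → R3) j = 0 :=
    Jn_le_ker n _ (by simp [uP]) (by simp [vP, zero_pow hn0]) (by simp [wP]) hj
  have hj3 : aeval (![0, 0, X 2] : Fin 3 → R3) j = 0 :=
    Jn_le_ker n _ (by simp [uP]) (by simp [vP]) (by simp [wP, zero_pow hn0]) hj
  have hP : P = 0 := by
    simp only [map_add, map_mul, ← Polynomial.aeval_algHom_apply, aeval_X,
      Matrix.cons_val_zero, Matrix.cons_val_one, Matrix.head_cons, Matrix.cons_val_two,
      Matrix.tail_cons, uP, vP, map_sub, map_pow, zero_pow hn0, hj2, sub_zero, sub_self,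
      mul_zero, zero_mul, add_zero, zero_add] at h2
    rcases mul_eq_zero.mp h2 with h | h
    · exact P_eq_zero_of_aeval1 h
    · exact absurd h (pow_ne_zero _ (X_ne_zero 1))
  have hR : Rq = 0 := by
    simp only [map_add, map_mul, ← Polynomial.aeval_algHom_apply, aeval_X,
      Matrix.cons_val_zero, Matrix.cons_val_one, Matrix.head_cons, Matrix.cons_val_two,
      Matrix.tail_cons, uP, vP, map_sub, map_pow, zero_pow hn0, hj1, sub_zero, zero_sub,
      sub_self, mul_zero, zero_mul, add_zero, zero_add, mul_neg, neg_eq_zero] at h1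
    rcases mul_eq_zero.mp h1 with h | h
    · exact P_eq_zero_of_aeval0 h
    · exact absurd h (pow_ne_zero _ (X_ne_zero 0))
  subst hP hR
  have hQ : Q = 0 := by
    simp only [map_add, map_mul, ← Polynomial.aeval_algHom_apply, aeval_X,
      Matrix.cons_val_zero, Matrix.cons_val_one, Matrix.head_cons, Matrix.cons_val_two,
      Matrix.tail_cons, uP, vP, map_sub, map_pow, map_zero, Polynomial.aeval_zero,
      zero_pow hn0, hj3, sub_zero, zero_sub, sub_self, mul_zero, zero_mul, add_zero,
      zero_add, mul_neg, neg_eq_zero] at h3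
    rcases mul_eq_zero.mp h3 with h | h
    · rcases mul_eq_zero.mp h with h' | h'
      · exact absurd h' (X_ne_zero 2)
      · exact P_eq_zero_of_aeval2 h'
    · exact absurd h (pow_ne_zero _ (X_ne_zero 2))
  subst hQ
  simpa using hj

end extraction

section genP
variable (n : ℕ) (a b : ℂ)

lemma aevalP_gen1 (hab : (a * b) ^ n = 1) (hb : b ^ n = 1) :
    aeval (![X 0, C (a * b) * X 0, C b * X 0] : Fin 3 → R3)
      (X 0 * ((X 1 : R3) ^ n - X 2 ^ n)) = 0 := by
  have e0 : aeval (![X 0, C (a * b) * X 0, C b * X 0] : Fin 3 → R3) ((X 0 : R3)) = X 0 := by simp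
  have e1 : aeval (![X 0, C (a * b) * X 0, C b * X 0] : Fin 3 → R3) ((X 1 : R3)) =
      C (a * b) * X 0 := by simp
  have e2 : aeval (![X 0, C (a * b) * X 0, C b * X 0] : Fin 3 → R3) ((X 2 : R3)) = C b * X 0 := by
    simp
  rw [map_mul, map_sub, map_pow, map_pow, e0, e1, e2, mul_pow, mul_pow, ← map_pow,
    ← map_pow, hab, hb, map_one, one_mul, sub_self, mul_zero]

lemma aevalP_gen2 (hb : b ^ n = 1) :
    aeval (![X 0, C (a * b) * X 0, C b * X 0] : Fin 3 → R3)
      (X 1 * ((X 2 : R3) ^ n - X 0 ^ n)) = 0 := by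
  have e0 : aeval (![X 0, C (a * b) * X 0, C b * X 0] : Fin 3 → R3) ((X 0 : R3)) = X 0 := by simp
  have e1 : aeval (![X 0, C (a * b) * X 0, C b * X 0] : Fin 3 → R3) ((X 1 : R3)) =
      C (a * b) * X 0 := by simp
  have e2 : aeval (![X 0, C (a * b) * X 0, C b * X 0] : Fin 3 → R3) ((X 2 : R3)) = C b * X 0 := by
    simp
  rw [map_mul, map_sub, map_pow, map_pow, e0, e1, e2, mul_pow, ← map_pow, hb, map_one,
    one_mul, sub_self, mul_zero]

lemma aevalP_gen3 (hab : (a * b) ^ n = 1) :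
    aeval (![X 0, C (a * b) * X 0, C b * X 0] : Fin 3 → R3)
      (X 2 * ((X 0 : R3) ^ n - X 1 ^ n)) = 0 := by
  have e0 : aeval (![X 0, C (a * b) * X 0, C b * X 0] : Fin 3 → R3) ((X 0 : R3)) = X 0 := by simp
  have e1 : aeval (![X 0, C (a * b) * X 0, C b * X 0] : Fin 3 → R3) ((X 1 : R3)) =
      C (a * b) * X 0 := by simp
  have e2 : aeval (![X 0, C (a * b) * X 0, C b * X 0] : Fin 3 → R3) ((X 2 : R3)) = C b * X 0 := by
    simp
  rw [map_mul, map_sub, map_pow, map_pow, e0, e1, e2, mul_pow, ← map_pow, hab, map_one,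
    one_mul, sub_self, mul_zero]

end genP

theorem statement14 (n : ℕ) (hn : 3 ≤ n) (η : ℂ) (hη : IsPrimitiveRoot η n)
    (J : Ideal (MvPolynomial (Fin 3) ℂ))
    (hJ : J = Ideal.span
      {X 0 * ((X 1 : MvPolynomial (Fin 3) ℂ) ^ n - X 2 ^ n),
        X 1 * (X 2 ^ n - X 0 ^ n), X 2 * (X 0 ^ n - X 1 ^ n)}) :
    J.radical = J ∧
      J = (⨅ i : Fin n, ⨅ j : Fin n,
            Ideal.span {(X 1 : MvPolynomial (Fin 3) ℂ) - C (η ^ (i : ℕ)) * X 2,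
              X 2 - C (η ^ (j : ℕ)) * X 0}) ⊓
          Ideal.span {(X 1 : MvPolynomial (Fin 3) ℂ), X 2} ⊓
          Ideal.span {(X 0 : MvPolynomial (Fin 3) ℂ), X 2} ⊓
          Ideal.span {(X 0 : MvPolynomial (Fin 3) ℂ), X 1} := by
  have hnpos : 0 < n := by omega
  have hn0 : n ≠ 0 := hnpos.ne'
  have hpow : ∀ k : ℕ, (η ^ k) ^ n = 1 := fun k => by
    rw [← pow_mul, mul_comm, pow_mul, hη.pow_eq_one, one_pow]
  have hlin : ∀ i j : Fin n,
      Ideal.span {(X 1 : R3) - C (η ^ (i : ℕ)) * X 2, X 2 - C (η ^ (j : ℕ)) * X 0} =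
      Ideal.span {lin1 (η ^ (i : ℕ)), lin2 (η ^ (j : ℕ))} := fun i j => rfl
  -- the main equality
  have hEq : J = (⨅ i : Fin n, ⨅ j : Fin n,
            Ideal.span {(X 1 : R3) - C (η ^ (i : ℕ)) * X 2,
              X 2 - C (η ^ (j : ℕ)) * X 0}) ⊓
          Ideal.span {(X 1 : R3), X 2} ⊓
          Ideal.span {(X 0 : R3), X 2} ⊓
          Ideal.span {(X 0 : R3), X 1} := by
    apply le_antisymm
    · -- J ≤ I
      rw [hJ, Ideal.span_le]
      intro g hg
      simp only [SetLike.mem_coe, Ideal.mem_inf, Ideal.mem_iInf]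
      refine ⟨⟨⟨fun i j => ?_, ?_⟩, ?_⟩, ?_⟩
      · -- g ∈ P i j
        rw [hlin i j, mem_P_iff]
        have hij : (η ^ (i : ℕ) * η ^ (j : ℕ)) ^ n = 1 := by
          rw [mul_pow, hpow, hpow, one_mul]
        rcases hg with rfl | rfl | rfl
        · exact aevalP_gen1 n _ _ hij (hpow _)
        · exact aevalP_gen2 n _ _ (hpow _)
        · exact aevalP_gen3 n _ _ hij
      · rw [mem_yz_iff]
        rcases hg with rfl | rfl | rfl <;>
          simp [zero_pow hn0]
      · rw [mem_xz_iff]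
        rcases hg with rfl | rfl | rfl <;>
          simp [zero_pow hn0]
      · rw [mem_xy_iff]
        rcases hg with rfl | rfl | rfl <;>
          simp [zero_pow hn0]
    · -- I ≤ J
      intro f hf
      simp only [Ideal.mem_inf, Ideal.mem_iInf] at hf
      obtain ⟨⟨⟨hA, hyz⟩, hxz⟩, hxy⟩ := hf
      have h1 : ∀ i : Fin n, f ∈ Ideal.span {lin1 (η ^ (i : ℕ)), (X 2 : R3) ^ n - X 0 ^ n} :=
        fun i => stage1 hnpos hη i f (fun j => by rw [← hlin i j]; exact hA i j)
      have h2 := stage2 hnpos hη f h1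
      have h3 := final_extraction n hn0 f h2 ((mem_yz_iff f).mp hyz)
        ((mem_xz_iff f).mp hxz) ((mem_xy_iff f).mp hxy)
      rw [hJ]
      exact h3
  refine ⟨?_, hEq⟩
  -- radicality
  apply le_antisymm _ Ideal.le_radical
  intro r hr
  obtain ⟨m, hm⟩ := Ideal.mem_radical_iff.mp hr
  rw [hEq] at hm ⊢
  simp only [Ideal.mem_inf, Ideal.mem_iInf] at hm ⊢
  obtain ⟨⟨⟨hA, hyz⟩, hxz⟩, hxy⟩ := hm
  refine ⟨⟨⟨fun i j => ?_, ?_⟩, ?_⟩, ?_⟩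
  · have hp : (Ideal.span {(X 1 : R3) - C (η ^ (i : ℕ)) * X 2,
        X 2 - C (η ^ (j : ℕ)) * X 0}).IsPrime := by
      rw [hlin i j]
      exact isPrime_of_ker _ _ (mem_P_iff (η ^ (i : ℕ)) (η ^ (j : ℕ)))
    exact hp.mem_of_pow_mem m (hA i j)
  · exact (isPrime_of_ker _ _ mem_yz_iff).mem_of_pow_mem m hyz
  · exact (isPrime_of_ker _ _ mem_xz_iff).mem_of_pow_mem m hxz
  · exact (isPrime_of_ker _ _ mem_xy_iff).mem_of_pow_mem m hxy
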